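/- Let B(x₁,x₂) = ((1-√(δ²-(x₂-x₁²)))/(1-δ)) · e^{x₁+√(δ²-(x₂-x₁²))-δ} for 0 < δ < 1. Then B satisfies the degenerate Monge–Ampère equation B_{x₁x₁}B_{x₂x₂} - B_{x₁x₂}² = 0 on the interior of the parabolic strip {(x₁,x₂) : x₁² < x₂ < x₁² + δ²}, together with the boundary condition B(x₁, x₁²) = e^{x₁} and the homogeneity B(x₁+t, x₂+2x₁t+t²) = e^t B(x₁,x₂). -/

import Mathlib

private lemma sqrt_hasDeriv1 (δ z y : ℝ) (hP : 0 < δ^2 - (z - y^2)) :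
    HasDerivAt (fun y : ℝ => Real.sqrt (δ^2 - (z - y^2)))
      (y / Real.sqrt (δ^2 - (z - y^2))) y := by
  have h1 : HasDerivAt (fun y : ℝ => δ^2 - (z - y^2)) (2*y) y := by
    have := ((hasDerivAt_pow 2 y).const_sub z).const_sub (δ^2)
    simpa using this
  have h2 := h1.sqrt (ne_of_gt hP)
  have hs : Real.sqrt (δ^2 - (z - y^2)) ≠ 0 := ne_of_gt (Real.sqrt_pos.2 hP)
  convert h2 using 1
  field_simp

private lemma sqrt_hasDeriv2 (δ y z : ℝ) (hP : 0 < δ^2 - (z - y^2)) :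
    HasDerivAt (fun z : ℝ => Real.sqrt (δ^2 - (z - y^2)))
      (-1 / (2 * Real.sqrt (δ^2 - (z - y^2)))) z := by
  have h1 : HasDerivAt (fun z : ℝ => δ^2 - (z - y^2)) (-1) z := by
    have := ((hasDerivAt_id z).sub_const (y^2)).const_sub (δ^2)
    simpa using this
  exact h1.sqrt (ne_of_gt hP)

private lemma hasDeriv_B1 (δ z y : ℝ) (h1δ : (1:ℝ) - δ ≠ 0) (hP : 0 < δ^2 - (z - y^2)) :
    HasDerivAt (fun y : ℝ => ((1 - Real.sqrt (δ^2 - (z - y^2)))/(1 - δ))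
        * Real.exp (y + Real.sqrt (δ^2 - (z - y^2)) - δ))
      (((1 - Real.sqrt (δ^2 - (z - y^2)) - y)/(1 - δ))
        * Real.exp (y + Real.sqrt (δ^2 - (z - y^2)) - δ)) y := by
  have hs := sqrt_hasDeriv1 δ z y hP
  have hsne : Real.sqrt (δ^2 - (z - y^2)) ≠ 0 := ne_of_gt (Real.sqrt_pos.2 hP)
  have hA : HasDerivAt (fun y : ℝ => (1 - Real.sqrt (δ^2 - (z - y^2)))/(1 - δ))
      (-(y / Real.sqrt (δ^2 - (z - y^2)))/(1 - δ)) y := (hs.const_sub 1).div_const _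
  have hE : HasDerivAt (fun y : ℝ => Real.exp (y + Real.sqrt (δ^2 - (z - y^2)) - δ))
      (Real.exp (y + Real.sqrt (δ^2 - (z - y^2)) - δ)
        * (1 + y / Real.sqrt (δ^2 - (z - y^2)))) y :=
    (((hasDerivAt_id' (x := y)).add hs).sub_const δ).exp
  have h := hA.mul hE
  refine h.congr_deriv ?_
  field_simp
  ring

private lemma hasDeriv_B2 (δ y z : ℝ) (h1δ : (1:ℝ) - δ ≠ 0) (hP : 0 < δ^2 - (z - y^2)) :
    HasDerivAt (fun z : ℝ => ((1 - Real.sqrt (δ^2 - (z - y^2)))/(1 - δ))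
        * Real.exp (y + Real.sqrt (δ^2 - (z - y^2)) - δ))
      (Real.exp (y + Real.sqrt (δ^2 - (z - y^2)) - δ) / (2 * (1 - δ))) z := by
  have hs := sqrt_hasDeriv2 δ y z hP
  have hsne : Real.sqrt (δ^2 - (z - y^2)) ≠ 0 := ne_of_gt (Real.sqrt_pos.2 hP)
  have hA : HasDerivAt (fun z : ℝ => (1 - Real.sqrt (δ^2 - (z - y^2)))/(1 - δ))
      ((-(-1 / (2 * Real.sqrt (δ^2 - (z - y^2)))))/(1 - δ)) z := (hs.const_sub 1).div_const _
  have hE : HasDerivAt (fun z : ℝ => Real.exp (y + Real.sqrt (δ^2 - (z - y^2)) - δ))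
      (Real.exp (y + Real.sqrt (δ^2 - (z - y^2)) - δ)
        * (-1 / (2 * Real.sqrt (δ^2 - (z - y^2))))) z :=
    ((hs.const_add y).sub_const δ).exp
  have h := hA.mul hE
  refine h.congr_deriv ?_
  field_simp
  ring



/-- B(x₁,x₂) = ((1-√(δ²-(x₂-x₁²)))/(1-δ))·e^{x₁+√(δ²-(x₂-x₁²))-δ}
satisfies the degenerate Monge–Ampère equation B₁₁B₂₂ - B₁₂² = 0 in the interior of the
parabolic strip {x₁² < x₂ < x₁² + δ²}, the boundary condition B(x₁,x₁²) = e^{x₁}, and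
the homogeneity B(x₁+t, x₂+2x₁t+t²) = e^t B(x₁,x₂). -/
theorem stmt19 (δ : ℝ) (hδ0 : 0 < δ) (hδ1 : δ < 1)
    (B : ℝ → ℝ → ℝ)
    (hB : ∀ x₁ x₂ : ℝ, B x₁ x₂ =
      ((1 - Real.sqrt (δ^2 - (x₂ - x₁^2)))/(1 - δ)) *
        Real.exp (x₁ + Real.sqrt (δ^2 - (x₂ - x₁^2)) - δ)) :
    (∀ x₁ x₂ : ℝ, x₁^2 < x₂ → x₂ < x₁^2 + δ^2 →
      deriv (fun y => deriv (fun z => B z x₂) y) x₁ *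
        deriv (fun y => deriv (fun z => B x₁ z) y) x₂ -
      (deriv (fun y => deriv (fun z => B z y) x₁) x₂)^2 = 0) ∧
    (∀ x₁ : ℝ, B x₁ (x₁^2) = Real.exp x₁) ∧
    (∀ x₁ x₂ t : ℝ, B (x₁ + t) (x₂ + 2*x₁*t + t^2) = Real.exp t * B x₁ x₂) := by
  have h1δ : (1:ℝ) - δ ≠ 0 := by linarith
  refine ⟨?_, ?_, ?_⟩
  · intro x₁ x₂ hlo hhi
    have hP : 0 < δ^2 - (x₂ - x₁^2) := by linarith
    set s := Real.sqrt (δ^2 - (x₂ - x₁^2)) with hs_def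
    have hsne : s ≠ 0 := ne_of_gt (Real.sqrt_pos.2 hP)
    -- D1 : second derivative in x₁
    have hc1 : ContinuousAt (fun y : ℝ => δ^2 - (x₂ - y^2)) x₁ := by fun_prop
    have hU1 : ∀ᶠ y in nhds x₁, 0 < δ^2 - (x₂ - y^2) :=
      hc1.preimage_mem_nhds (Ioi_mem_nhds hP)
    have heq1 : (fun y => deriv (fun z => B z x₂) y) =ᶠ[nhds x₁]
        (fun y => ((1 - Real.sqrt (δ^2 - (x₂ - y^2)) - y)/(1-δ)) *
          Real.exp (y + Real.sqrt (δ^2 - (x₂ - y^2)) - δ)) := by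
      filter_upwards [hU1] with y hy
      rw [show (fun z => B z x₂) = fun z : ℝ =>
          ((1 - Real.sqrt (δ^2 - (x₂ - z^2)))/(1 - δ)) *
            Real.exp (z + Real.sqrt (δ^2 - (x₂ - z^2)) - δ) from funext fun z => hB z x₂]
      exact (hasDeriv_B1 δ x₂ y h1δ hy).deriv
    have hs1 := sqrt_hasDeriv1 δ x₂ x₁ hP
    have hD1 : deriv (fun y => deriv (fun z => B z x₂) y) x₁ =
        ((-(x₁/s) - 1)/(1-δ)) * Real.exp (x₁ + s - δ)
          + ((1 - s - x₁)/(1-δ)) * (Real.exp (x₁ + s - δ) * (1 + x₁/s)) := by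
      rw [heq1.deriv_eq]
      have hA : HasDerivAt (fun y : ℝ => (1 - Real.sqrt (δ^2 - (x₂ - y^2)) - y)/(1-δ))
          ((-(x₁/s) - 1)/(1-δ)) x₁ :=
        ((hs1.const_sub 1).sub (hasDerivAt_id' (x := x₁))).div_const _
      have hE : HasDerivAt (fun y : ℝ => Real.exp (y + Real.sqrt (δ^2 - (x₂ - y^2)) - δ))
          (Real.exp (x₁ + s - δ) * (1 + x₁/s)) x₁ :=
        (((hasDerivAt_id' (x := x₁)).add hs1).sub_const δ).exp
      exact (hA.mul hE).deriv
    -- D2 : second derivative in x₂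
    have hc2 : ContinuousAt (fun z : ℝ => δ^2 - (z - x₁^2)) x₂ := by fun_prop
    have hU2 : ∀ᶠ z in nhds x₂, 0 < δ^2 - (z - x₁^2) :=
      hc2.preimage_mem_nhds (Ioi_mem_nhds hP)
    have heq2 : (fun z => deriv (fun w => B x₁ w) z) =ᶠ[nhds x₂]
        (fun z => Real.exp (x₁ + Real.sqrt (δ^2 - (z - x₁^2)) - δ) / (2 * (1-δ))) := by
      filter_upwards [hU2] with z hz
      rw [show (fun w => B x₁ w) = fun w : ℝ =>
          ((1 - Real.sqrt (δ^2 - (w - x₁^2)))/(1 - δ)) *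
            Real.exp (x₁ + Real.sqrt (δ^2 - (w - x₁^2)) - δ) from funext fun w => hB x₁ w]
      exact (hasDeriv_B2 δ x₁ z h1δ hz).deriv
    have hs2 := sqrt_hasDeriv2 δ x₁ x₂ hP
    have hD2 : deriv (fun y => deriv (fun z => B x₁ z) y) x₂ =
        (Real.exp (x₁ + s - δ) * (-1 / (2*s))) / (2 * (1-δ)) := by
      rw [heq2.deriv_eq]
      exact ((((hs2.const_add x₁).sub_const δ).exp).div_const _).deriv
    -- D3 : mixed second derivative
    have heq3 : (fun y => deriv (fun z => B z y) x₁) =ᶠ[nhds x₂]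
        (fun y => ((1 - Real.sqrt (δ^2 - (y - x₁^2)) - x₁)/(1-δ)) *
          Real.exp (x₁ + Real.sqrt (δ^2 - (y - x₁^2)) - δ)) := by
      filter_upwards [hU2] with y hy
      rw [show (fun z => B z y) = fun z : ℝ =>
          ((1 - Real.sqrt (δ^2 - (y - z^2)))/(1 - δ)) *
            Real.exp (z + Real.sqrt (δ^2 - (y - z^2)) - δ) from funext fun z => hB z y]
      exact (hasDeriv_B1 δ y x₁ h1δ hy).deriv
    have hD3 : deriv (fun y => deriv (fun z => B z y) x₁) x₂ =
        ((-(-1 / (2*s)))/(1-δ)) * Real.exp (x₁ + s - δ)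
          + ((1 - s - x₁)/(1-δ)) * (Real.exp (x₁ + s - δ) * (-1 / (2*s))) := by
      rw [heq3.deriv_eq]
      have hA : HasDerivAt (fun y : ℝ => (1 - Real.sqrt (δ^2 - (y - x₁^2)) - x₁)/(1-δ))
          ((-(-1 / (2*s)))/(1-δ)) x₂ :=
        ((hs2.const_sub 1).sub_const x₁).div_const _
      have hE : HasDerivAt (fun y : ℝ => Real.exp (x₁ + Real.sqrt (δ^2 - (y - x₁^2)) - δ))
          (Real.exp (x₁ + s - δ) * (-1 / (2*s))) x₂ :=
        ((hs2.const_add x₁).sub_const δ).exp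
      exact (hA.mul hE).deriv
    rw [hD1, hD2, hD3]
    field_simp
    ring
  · intro x₁
    rw [hB]
    rw [show δ^2 - (x₁^2 - x₁^2) = δ^2 by ring, Real.sqrt_sq hδ0.le,
      div_self h1δ, one_mul, show x₁ + δ - δ = x₁ by ring]
  · intro x₁ x₂ t
    rw [hB, hB,
      show δ^2 - (x₂ + 2*x₁*t + t^2 - (x₁ + t)^2) = δ^2 - (x₂ - x₁^2) by ring,
      show x₁ + t + Real.sqrt (δ^2 - (x₂ - x₁^2)) - δ
        = t + (x₁ + Real.sqrt (δ^2 - (x₂ - x₁^2)) - δ) by ring, Real.exp_add]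
    ring
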